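/- Let l ∈ ℝ and L > 0. For every Lebesgue measurable set J ⊆ (l, l+L] of Lebesgue measure m > 0, one has ∫_J log(L/(x−l)) dx ≤ m·(1 + log(L/m)). -/

import Mathlib

open MeasureTheory Set

private lemma aux_hasDeriv (l L : ℝ) (hL : 0 < L) {x : ℝ} (hx : l < x) :
    HasDerivAt (fun x => (x - l) * Real.log L - (x - l) * Real.log (x - l) + (x - l))
      (Real.log (L / (x - l))) x := by
  have hx0 : x - l ≠ 0 := sub_ne_zero.2 hx.ne'
  have h1 : HasDerivAt (fun x : ℝ => x - l) 1 x := (hasDerivAt_id x).sub_const l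
  have h2 : HasDerivAt (fun x => (x - l) * Real.log (x - l)) ((Real.log (x - l) + 1) * 1) x :=
    by have := (Real.hasDerivAt_mul_log hx0).comp x h1; exact this
  have h3 : HasDerivAt (fun x => (x - l) * Real.log L) (1 * Real.log L) x :=
    h1.mul_const _
  have := (h3.sub h2).add h1
  refine this.congr_deriv ?_
  rw [Real.log_div hL.ne' hx0]
  ring

private lemma aux_cont (l L : ℝ) :
    Continuous (fun x => (x - l) * Real.log L - (x - l) * Real.log (x - l) + (x - l)) := by
  have h : Continuous fun x : ℝ => x - l := continuous_id.sub continuous_const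
  exact ((h.mul continuous_const).sub (Real.continuous_mul_log.comp h)).add h

/-- Integrability of the kernel on `Ioc l (l+b)` for `l < l+b ≤ l+L`. -/
private lemma aux_integrable (l L b : ℝ) (hL : 0 < L) (_hb : 0 < b) (hbL : b ≤ L) :
    IntegrableOn (fun x => Real.log (L / (x - l))) (Ioc l (l + b)) := by
  apply intervalIntegral.integrableOn_deriv_of_nonneg (g := fun x =>
      (x - l) * Real.log L - (x - l) * Real.log (x - l) + (x - l))
  · exact (aux_cont l L).continuousOn
  · intro x hx
    exact aux_hasDeriv l L hL hx.1
  · intro x hx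
    apply Real.log_nonneg
    rw [le_div_iff₀ (by linarith [hx.1])]
    nlinarith [hx.1, hx.2]

/-- Value of the integral over `Ioc l (l+m)`. -/
private lemma aux_value (l L m : ℝ) (hL : 0 < L) (hm : 0 < m) (hmL : m ≤ L) :
    ∫ x in Ioc l (l + m), Real.log (L / (x - l)) = m * (1 + Real.log (L / m)) := by
  have h1 := intervalIntegral.integral_eq_sub_of_hasDeriv_right
      (f := fun x => (x - l) * Real.log L - (x - l) * Real.log (x - l) + (x - l))
      (f' := fun x => Real.log (L / (x - l))) (a := l) (b := l + m)
      ((aux_cont l L).continuousOn)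
      (by
        intro x hx
        rw [min_eq_left (by linarith : l ≤ l + m)] at hx
        exact (aux_hasDeriv l L hL hx.1).hasDerivWithinAt)
      (by
        rw [intervalIntegrable_iff_integrableOn_Ioc_of_le (by linarith)]
        exact aux_integrable l L m hL hm hmL)
  rw [← intervalIntegral.integral_of_le (by linarith : l ≤ l + m), h1]
  simp only [add_sub_cancel_left, sub_self, Real.log_zero, mul_zero, zero_mul, sub_zero, add_zero,
    zero_sub, neg_zero, zero_add, sub_zero]
  rw [Real.log_div hL.ne' hm.ne']
  ring

theorem stmt_18 (l L : ℝ) (hL : 0 < L)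
    (J : Set ℝ) (hJ : MeasurableSet J) (hJsub : J ⊆ Set.Ioc l (l + L))
    (hJpos : 0 < volume J) :
    ∫ x in J, Real.log (L / (x - l)) ≤
      (volume J).toReal * (1 + Real.log (L / (volume J).toReal)) := by
  set f : ℝ → ℝ := fun x => Real.log (L / (x - l)) with hf
  set m : ℝ := (volume J).toReal with hm
  have hJfin : volume J ≠ ⊤ := by
    refine ne_top_of_le_ne_top ?_ (measure_mono hJsub)
    rw [Real.volume_Ioc]
    exact ENNReal.ofReal_ne_top
  have hmpos : 0 < m := ENNReal.toReal_pos hJpos.ne' hJfin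
  have hmL : m ≤ L := by
    have := measure_mono (μ := volume) hJsub
    rw [Real.volume_Ioc, add_sub_cancel_left] at this
    calc m ≤ (ENNReal.ofReal L).toReal := ENNReal.toReal_mono ENNReal.ofReal_ne_top this
    _ = L := ENNReal.toReal_ofReal hL.le
  set I : Set ℝ := Ioc l (l + m) with hI
  have hImeas : MeasurableSet I := measurableSet_Ioc
  have hIvol : volume I = volume J := by
    rw [hI, Real.volume_Ioc, add_sub_cancel_left, hm, ENNReal.ofReal_toReal hJfin]
  have hIsub : I ⊆ Ioc l (l + L) := Ioc_subset_Ioc le_rfl (by linarith)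
  -- integrability
  have hint : IntegrableOn f (Ioc l (l + L)) := aux_integrable l L L hL hL le_rfl
  have hintJ : IntegrableOn f J := hint.mono_set hJsub
  have hintI : IntegrableOn f I := hint.mono_set hIsub
  -- volumes of differences agree
  have hvol : volume (J \ I) = volume (I \ J) := by
    have e1 : volume (J ∩ I) + volume (J \ I) = volume J := measure_inter_add_diff J hImeas
    have e2 : volume (I ∩ J) + volume (I \ J) = volume I := measure_inter_add_diff I hJ
    rw [inter_comm] at e2
    rw [hIvol] at e2
    have := e1.trans e2.symm
    exact (ENNReal.add_right_inj (ne_top_of_le_ne_top hJfin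
      (measure_mono (inter_subset_left)))).1 this
  have hfinJI : volume (J \ I) ≠ ⊤ := ne_top_of_le_ne_top hJfin (measure_mono diff_subset)
  have hfinIJ : volume (I \ J) ≠ ⊤ := by rw [← hvol]; exact hfinJI
  set c : ℝ := Real.log (L / m) with hc
  -- bound on J \ I
  have hb1 : ∫ x in J \ I, f x ≤ c * (volume (J \ I)).toReal := by
    have : ∫ x in J \ I, f x ≤ ∫ _x in J \ I, c := by
      apply setIntegral_mono_on (hintJ.mono_set diff_subset)
        (integrableOn_const hfinJI) (hJ.diff hImeas)
      intro x hx
      have hx1 := hJsub hx.1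
      have hx2 : l + m < x := by
        by_contra h
        exact hx.2 ⟨hx1.1, not_lt.1 h⟩
      have hxl : 0 < x - l := by linarith [hx1.1]
      apply Real.log_le_log (div_pos hL hxl)
      apply div_le_div_of_nonneg_left hL.le hmpos
      linarith
    rwa [setIntegral_const, smul_eq_mul, mul_comm] at this
  -- bound on I \ J
  have hb2 : c * (volume (I \ J)).toReal ≤ ∫ x in I \ J, f x := by
    have : ∫ _x in I \ J, c ≤ ∫ x in I \ J, f x := by
      apply setIntegral_mono_on (integrableOn_const hfinIJ)
        (hintI.mono_set diff_subset) (hImeas.diff hJ)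
      intro x hx
      have hx1 := hx.1
      have hxl : 0 < x - l := by linarith [hx1.1]
      apply Real.log_le_log (div_pos hL hmpos)
      apply div_le_div_of_nonneg_left hL.le hxl
      linarith [hx1.2]
    rwa [setIntegral_const, smul_eq_mul, mul_comm] at this
  -- split the integrals
  have hsplitJ : ∫ x in J, f x = (∫ x in J ∩ I, f x) + ∫ x in J \ I, f x := by
    rw [← setIntegral_union (disjoint_sdiff_self_right.mono_left inter_subset_right)
      (hJ.diff hImeas) (hintJ.mono_set inter_subset_left) (hintJ.mono_set diff_subset),
      inter_union_diff]
  have hsplitI : ∫ x in I, f x = (∫ x in J ∩ I, f x) + ∫ x in I \ J, f x := by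
    rw [← setIntegral_union (disjoint_sdiff_self_right.mono_left inter_subset_left)
      (hImeas.diff hJ) (hintI.mono_set inter_subset_right) (hintI.mono_set diff_subset),
      inter_comm J I, inter_union_diff]
  have key : ∫ x in J, f x ≤ ∫ x in I, f x := by
    rw [hsplitJ, hsplitI]
    have : (volume (J \ I)).toReal = (volume (I \ J)).toReal := by rw [hvol]
    rw [this] at hb1
    linarith
  calc ∫ x in J, f x ≤ ∫ x in I, f x := key
  _ = m * (1 + Real.log (L / m)) := aux_value l L m hL hmpos hmL
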